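/- Let (M^n, g, ∇, φ, ξ) be a quadratic metric φ-hypersurface of a locally metallic Riemannian manifold, with ∇_X ξ = pAX − φAX, Aξ = 0, and (∇_X φ)Y = η(Y)AX + g(AX,Y)ξ. Then the Riemannian curvature tensor satisfies R(X,Y)ξ = p((∇_X A)Y − (∇_Y A)X) − φ((∇_X A)Y − (∇_Y A)X) for all tangent X,Y. In particular, if the second fundamental form is parallel (∇A = 0), then R(X,Y)ξ = 0. -/
import Mathlib


/-- Let `(M^n, g, ∇, φ, ξ)` be a quadratic metric φ-hypersurface of a
locally metallic Riemannian manifold, with `∇_X ξ = pAX − φAX`, `Aξ = 0` and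
`(∇_X φ)Y = η(Y)AX + g(AX,Y)ξ` for the shape operator `A`. Then the Riemannian curvature
`R(X,Y)Z = ∇_X∇_Y Z − ∇_Y∇_X Z − ∇_{[X,Y]}Z` satisfies
`R(X,Y)ξ = p((∇_X A)Y − (∇_Y A)X) − φ((∇_X A)Y − (∇_Y A)X)`, where
`(∇_X A)Y = ∇_X(AY) − A(∇_X Y)`. In particular, if the second fundamental form is
parallel (`∇A = 0`), then `R(X,Y)ξ = 0`. -/
theorem quadratic_hypersurface_curvature_xi
    {A V : Type*} [CommRing A] [AddCommGroup V] [Module A V]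
    (g : V →ₗ[A] V →ₗ[A] A)
    (hgsym : ∀ X Y, g X Y = g Y X)
    (D : V → A → A)
    (bracket : V → V → V)
    (nabla : V → V → V)
    (hnablaAdd : ∀ X Y Z, nabla X (Y + Z) = nabla X Y + nabla X Z)
    (hnablaSub : ∀ X Y Z, nabla X (Y - Z) = nabla X Y - nabla X Z)
    (hLeibniz : ∀ X (c : A) Y, nabla X (c • Y) = D X c • Y + c • nabla X Y)
    (htorsionfree : ∀ X Y, nabla X Y - nabla Y X = bracket X Y)
    (φ : V →ₗ[A] V) (ξ : V) (η : V → A) (p : ℕ) (hp : 0 < p)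
    (hη : ∀ X, η X = g X ξ)
    (hφξ : φ ξ = 0) (hηξ : η ξ = 1)
    (hφ2 : ∀ X, φ (φ X) = (p : A) • φ X + (X - η X • ξ))
    (hφsym : ∀ X Y, g (φ X) Y = g X (φ Y))
    (S : V →ₗ[A] V)
    (hSsym : ∀ X Y, g (S X) Y = g X (S Y))
    (hSξ : S ξ = 0)
    (hnablaXi : ∀ X, nabla X ξ = (p : A) • S X - φ (S X))
    (hGauss : ∀ X Y, nabla X (φ Y) - φ (nabla X Y) = η Y • S X + g (S X) Y • ξ)
    (R : V → V → V → V)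
    (hR : ∀ X Y Z, R X Y Z =
      nabla X (nabla Y Z) - nabla Y (nabla X Z) - nabla (bracket X Y) Z)
    (nablaS : V → V → V)
    (hnablaS : ∀ X Y, nablaS X Y = nabla X (S Y) - S (nabla X Y)) :
    (∀ X Y, R X Y ξ =
      (p : A) • (nablaS X Y - nablaS Y X) - φ (nablaS X Y - nablaS Y X)) ∧
    ((∀ X Y, nablaS X Y = 0) → ∀ X Y, R X Y ξ = 0) := by
  -- nabla X 0 = 0
  have hzero : ∀ X, nabla X (0:V) = 0 := by
    intro X
    have h := hnablaSub X 0 0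
    simpa using h
  -- nabla commutes with nsmul
  have hnsmul : ∀ X (n : ℕ) (Z : V), nabla X (n • Z) = n • nabla X Z := by
    intro X n Z
    induction n with
    | zero => simpa using hzero X
    | succ k ih =>
        rw [succ_nsmul, hnablaAdd, ih, succ_nsmul]
  have hcast : ∀ X (Z : V), nabla X ((p : A) • Z) = (p : A) • nabla X Z := by
    intro X Z
    rw [Nat.cast_smul_eq_nsmul A p Z, hnsmul, ← Nat.cast_smul_eq_nsmul A p]
  have hηS : ∀ X, η (S X) = 0 := by
    intro X
    rw [hη, hSsym, hSξ]
    simp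
  -- nabla X (φ (S Y)) computed
  have hkey : ∀ X Y, nabla X (φ (S Y)) = φ (nabla X (S Y)) + g (S X) (S Y) • ξ := by
    intro X Y
    have h := hGauss X (S Y)
    rw [hηS] at h
    have : nabla X (φ (S Y)) - φ (nabla X (S Y)) = g (S X) (S Y) • ξ := by
      rw [h]; simp
    linear_combination (norm := module) this
  have main : ∀ X Y, R X Y ξ =
      (p : A) • (nablaS X Y - nablaS Y X) - φ (nablaS X Y - nablaS Y X) := by
    intro X Y
    rw [hR, hnablaXi X, hnablaXi Y, hnablaXi (bracket X Y),
      hnablaSub, hnablaSub, hcast, hcast, hkey, hkey,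
      ← htorsionfree, hnablaS, hnablaS, map_sub S]
    have hg : g (S X) (S Y) = g (S Y) (S X) := hgsym _ _
    rw [hg]
    simp only [map_sub]
    module
  refine ⟨main, fun h X Y => ?_⟩
  rw [main X Y, h, h]
  simp
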